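/- Let X = ℝ₊ × ℝ, where the first component is a positive real and the second an arbitrary real, and let R : X³ → X³ be the map obtained from the translation invariants of the discrete potential KP equation, sending ((x₁,y₁),(x₂,y₂),(x₃,y₃)) to ((u₁,v₁),(u₂,v₂),(u₃,v₃)) with u₁ = x₁·x₂/(x₁+x₃), u₂ = x₁+x₃, u₃ = x₂·x₃/(x₁+x₃), v₁ = x₃ + y₂, v₂ = (x₁·y₁ + x₃·y₃)/(x₁+x₃), v₃ = y₂ − x₁ (well defined since x₁+x₃ > 0 and the x-components of the image are positive). Then R satisfies the functional tetrahedron equation. -/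
import Mathlib


/-- Apply `R` to components 1, 2, 3 of a 6-tuple. -/
def map123 {X : Type*} (R : X × X × X → X × X × X) :
    X × X × X × X × X × X → X × X × X × X × X × X :=
  fun (x1, x2, x3, x4, x5, x6) =>
    ((R (x1, x2, x3)).1, (R (x1, x2, x3)).2.1, (R (x1, x2, x3)).2.2, x4, x5, x6)

/-- Apply `R` to components 1, 4, 5 of a 6-tuple. -/
def map145 {X : Type*} (R : X × X × X → X × X × X) :
    X × X × X × X × X × X → X × X × X × X × X × X :=
  fun (x1, x2, x3, x4, x5, x6) =>
    ((R (x1, x4, x5)).1, x2, x3, (R (x1, x4, x5)).2.1, (R (x1, x4, x5)).2.2, x6)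

/-- Apply `R` to components 2, 4, 6 of a 6-tuple. -/
def map246 {X : Type*} (R : X × X × X → X × X × X) :
    X × X × X × X × X × X → X × X × X × X × X × X :=
  fun (x1, x2, x3, x4, x5, x6) =>
    (x1, (R (x2, x4, x6)).1, x3, (R (x2, x4, x6)).2.1, x5, (R (x2, x4, x6)).2.2)

/-- Apply `R` to components 3, 5, 6 of a 6-tuple. -/
def map356 {X : Type*} (R : X × X × X → X × X × X) :
    X × X × X × X × X × X → X × X × X × X × X × X :=
  fun (x1, x2, x3, x4, x5, x6) =>
    (x1, x2, (R (x3, x5, x6)).1, x4, (R (x3, x5, x6)).2.1, (R (x3, x5, x6)).2.2)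

/-- The functional tetrahedron equation. -/
def IsTetrahedron {X : Type*} (R : X × X × X → X × X × X) : Prop :=
  map123 R ∘ map145 R ∘ map246 R ∘ map356 R =
    map356 R ∘ map246 R ∘ map145 R ∘ map123 R

/-- The positive real numbers. -/
abbrev PReal : Type := {x : ℝ // 0 < x}

/-- The tetrahedron map from the translation invariants of discrete potential KP,
on `ℝ₊ × ℝ`. -/
noncomputable def dpKPMap :
    (PReal × ℝ) × (PReal × ℝ) × (PReal × ℝ) → (PReal × ℝ) × (PReal × ℝ) × (PReal × ℝ) :=
  fun ((⟨x1, hx1⟩, y1), (⟨x2, hx2⟩, y2), (⟨x3, hx3⟩, y3)) =>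
    ((⟨x1 * x2 / (x1 + x3), by positivity⟩, x3 + y2),
     (⟨x1 + x3, by positivity⟩, (x1 * y1 + x3 * y3) / (x1 + x3)),
     (⟨x2 * x3 / (x1 + x3), by positivity⟩, y2 - x1))

set_option maxHeartbeats 4000000 in
/-- the map obtained from the translation invariants of discrete potential
KP satisfies the functional tetrahedron equation. -/
theorem dpKPMap_tetrahedron : IsTetrahedron dpKPMap := by
  funext ⟨⟨⟨x1, h1⟩, y1⟩, ⟨⟨x2, h2⟩, y2⟩, ⟨⟨x3, h3⟩, y3⟩, ⟨⟨x4, h4⟩, y4⟩,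
    ⟨⟨x5, h5⟩, y5⟩, ⟨⟨x6, h6⟩, y6⟩⟩
  show (map123 dpKPMap (map145 dpKPMap (map246 dpKPMap (map356 dpKPMap _)))) =
    (map356 dpKPMap (map246 dpKPMap (map145 dpKPMap (map123 dpKPMap _))))
  simp only [map123, map145, map246, map356, dpKPMap]
  have h13 : x1 + x3 ≠ 0 := by positivity
  have h15 : x1 + x5 ≠ 0 := by positivity
  have h35 : x3 + x5 ≠ 0 := by positivity
  have h135 : x1 * x3 + x1 * x5 + x3 * x5 ≠ 0 := by positivity
  refine Prod.ext ?_ (Prod.ext ?_ (Prod.ext ?_ (Prod.ext ?_ (Prod.ext ?_ ?_)))) <;>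
    refine Prod.ext (Subtype.ext ?_) ?_ <;>
    · show _ = _
      field_simp
      ring
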